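/- The function f₈(r) = (E(r) − (1−r)K(r)) / (√r · (1−r) · K(r)) is strictly increasing on (0,1), with f₈(r)→0 as r→0+ and f₈(r)→∞ as r→1−. -/

import Mathlib

open Real Set Filter Topology
open MeasureTheory intervalIntegral

/-- Complete elliptic integral of the first kind. -/
noncomputable def EK (r : ℝ) : ℝ :=
  ∫ t in (0:ℝ)..(π/2), 1 / Real.sqrt (1 - r^2 * Real.sin t ^ 2)

/-- Complete elliptic integral of the second kind. -/
noncomputable def EE (r : ℝ) : ℝ :=
  ∫ t in (0:ℝ)..(π/2), Real.sqrt (1 - r^2 * Real.sin t ^ 2)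

/-- K'(r) = K(√(1-r²)). -/
noncomputable def EK' (r : ℝ) : ℝ := EK (Real.sqrt (1 - r^2))

/-- E'(r) = E(√(1-r²)). -/
noncomputable def EE' (r : ℝ) : ℝ := EE (Real.sqrt (1 - r^2))

/-- The function ψ. -/
noncomputable def psi (r : ℝ) : ℝ :=
  2 * (EE r - (1 - r) * EK r) / (EE' r - r * EK' r)


lemma key_ab (r a b : ℝ) (hr : 0 < r) (hr1 : r < 1)
    (ha : 1 - r^2 ≤ a) (ha1 : a ≤ 1) (hb : 1 - r^2 ≤ b) (hb1 : b ≤ 1) (hab : b ≤ a) :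
    (1 - r) * (a - b)^2 ≤ (a + b - 2*(1 - r^2)) * (a * b) := by
  have hs : (0:ℝ) < 1 - r^2 := by nlinarith
  have hapos : 0 < a := lt_of_lt_of_le hs ha
  have hbpos : 0 < b := lt_of_lt_of_le hs hb
  have h1 : (1 - r) * (a - b) ≤ a * b := by nlinarith [mul_nonneg hapos.le (show (0:ℝ) ≤ b - (1-r) by nlinarith)]
  have h2 : a - b ≤ a + b - 2*(1 - r^2) := by nlinarith
  have h3 : 0 ≤ a - b := by linarith
  calc (1-r)*(a-b)^2 = ((1-r)*(a-b))*(a-b) := by ring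
    _ ≤ (a*b)*(a-b) := mul_le_mul_of_nonneg_right h1 h3
    _ ≤ (a*b)*(a+b-2*(1-r^2)) := mul_le_mul_of_nonneg_left h2 (by positivity)
    _ = (a + b - 2*(1 - r^2)) * (a * b) := by ring

lemma key_pt (r x y : ℝ) (hr : 0 < r) (hr1 : r < 1) (hx : 0 ≤ x) (hx1 : x ≤ 1)
    (hy : 0 ≤ y) (hy1 : y ≤ 1) :
    r^2 * (1-r) * (x - y)^2 ≤ (2 - x - y) * ((1 - r^2*x) * (1 - r^2*y)) := by
  have hr2 : (0:ℝ) < r^2 := by positivity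
  rcases le_total y x with h | h
  · have := key_ab r (1 - r^2*y) (1 - r^2*x) hr hr1 (by nlinarith) (by nlinarith) (by nlinarith) (by nlinarith) (by nlinarith)
    nlinarith
  · have := key_ab r (1 - r^2*x) (1 - r^2*y) hr hr1 (by nlinarith) (by nlinarith) (by nlinarith) (by nlinarith) (by nlinarith)
    nlinarith


lemma u_pos {r : ℝ} (hr : r^2 < 1) (t : ℝ) : 0 < 1 - r^2 * Real.sin t ^ 2 := by
  nlinarith [Real.sin_sq_le_one t, sq_nonneg (Real.sin t), sq_nonneg r, sq_nonneg (r * Real.sin t)]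

lemma cont_W {r : ℝ} (hr : r^2 < 1) (φ : ℝ → ℝ) (hφ : Continuous φ) :
    Continuous (fun t => φ t / Real.sqrt (1 - r^2 * Real.sin t ^ 2)) := by
  apply hφ.div (by continuity)
  intro t
  exact ne_of_gt (Real.sqrt_pos.2 (u_pos hr t))

lemma cont_D {r : ℝ} (hr : r^2 < 1) (φ : ℝ → ℝ) (hφ : Continuous φ) :
    Continuous (fun t => φ t * (r * Real.sin t ^ 2) /
      ((1 - r^2 * Real.sin t ^ 2) * Real.sqrt (1 - r^2 * Real.sin t ^ 2))) := by
  apply Continuous.div (by continuity) (by continuity)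
  intro t
  have := u_pos hr t
  have := Real.sqrt_pos.2 (u_pos hr t)
  positivity

lemma sq_lt_one_of_ball {r x : ℝ} (hr0 : 0 < r) (hr1 : r < 1)
    (hx : x ∈ Metric.ball r ((1-r)/2)) : |x| ≤ (1+r)/2 := by
  rw [Metric.mem_ball, Real.dist_eq] at hx
  rw [abs_le]; rw [abs_lt] at hx; constructor <;> nlinarith

lemma hasDerivAt_Iphi (φ : ℝ → ℝ) (hφ : Continuous φ) (hφ1 : ∀ t, |φ t| ≤ 1)
    {r : ℝ} (hr0 : 0 < r) (hr1 : r < 1) :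
    HasDerivAt (fun ρ => ∫ t in (0:ℝ)..(π/2), φ t / Real.sqrt (1 - ρ^2 * Real.sin t ^2))
      (∫ t in (0:ℝ)..(π/2), φ t * (r * Real.sin t^2) /
        ((1 - r^2*Real.sin t^2) * Real.sqrt (1 - r^2*Real.sin t^2))) r := by
  set b : ℝ := (1+r)/2 with hb_def
  have hb1 : b < 1 := by simp only [hb_def]; linarith
  have hb0 : 0 < b := by simp only [hb_def]; linarith
  have hbsq : b^2 < 1 := by nlinarith
  have hd0 : 0 < (1 - b^2) * Real.sqrt (1 - b^2) :=
    mul_pos (by linarith) (Real.sqrt_pos.2 (by linarith))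
  have hrsq : r^2 < 1 := by nlinarith
  have hεpos : (0:ℝ) < (1-r)/2 := by linarith
  apply (intervalIntegral.hasDerivAt_integral_of_dominated_loc_of_deriv_le
    (F := fun ρ t => φ t / Real.sqrt (1 - ρ^2 * Real.sin t ^2))
    (F' := fun ρ t => φ t * (ρ * Real.sin t^2) /
        ((1 - ρ^2*Real.sin t^2) * Real.sqrt (1 - ρ^2*Real.sin t^2)))
    (bound := fun _ => b / ((1 - b^2) * Real.sqrt (1 - b^2)))
    (Metric.ball_mem_nhds r hεpos) ?_ ?_ ?_ ?_ ?_ ?_).2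
  · -- measurability eventually
    filter_upwards [Metric.ball_mem_nhds r hεpos] with x hx
    have hx2 : x^2 < 1 := by
      have := sq_lt_one_of_ball hr0 hr1 hx
      nlinarith [abs_nonneg x, sq_abs x, abs_le.1 this]
    exact (cont_W hx2 φ hφ).aestronglyMeasurable
  · exact (cont_W hrsq φ hφ).intervalIntegrable _ _
  · exact (cont_D hrsq φ hφ).aestronglyMeasurable
  · -- bound
    refine ae_of_all _ fun t _ x hx => ?_
    have habs := sq_lt_one_of_ball hr0 hr1 hx
    have hx2 : x^2 ≤ b^2 := by rw [← sq_abs]; exact pow_le_pow_left₀ (abs_nonneg x) habs 2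
    have hxx2 : x^2 < 1 := lt_of_le_of_lt hx2 hbsq
    have hs := Real.sin_sq_le_one t
    have hs0 : (0:ℝ) ≤ Real.sin t ^2 := sq_nonneg _
    have hu : 1 - b^2 ≤ 1 - x^2 * Real.sin t^2 := by nlinarith
    have hupos : 0 < 1 - x^2 * Real.sin t^2 := u_pos hxx2 t
    have hden : (1 - b^2) * Real.sqrt (1 - b^2) ≤
        (1 - x^2*Real.sin t^2) * Real.sqrt (1 - x^2*Real.sin t^2) := by
      have := Real.sqrt_le_sqrt hu
      have := Real.sqrt_nonneg (1 - b^2)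
      nlinarith
    rw [Real.norm_eq_abs, abs_div]
    apply div_le_div₀ (le_of_lt hb0) ?_ hd0 ?_
    · rw [abs_mul]
      calc |φ t| * |x * Real.sin t^2| ≤ 1 * |x * Real.sin t^2| :=
            mul_le_mul_of_nonneg_right (hφ1 t) (abs_nonneg _)
        _ = |x| * Real.sin t^2 := by rw [one_mul, abs_mul, abs_of_nonneg hs0]
        _ ≤ b * 1 := mul_le_mul habs hs hs0 hb0.le
        _ = b := mul_one b
    · rwa [abs_of_pos]
      positivity
  · exact intervalIntegrable_const
  · -- differentiability
    refine ae_of_all _ fun t _ x hx => ?_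
    have habs := sq_lt_one_of_ball hr0 hr1 hx
    have hx2 : x^2 < 1 := by nlinarith [abs_nonneg x, sq_abs x, abs_le.1 habs]
    have hupos : 0 < 1 - x^2 * Real.sin t^2 := u_pos hx2 t
    have hspos : 0 < Real.sqrt (1 - x^2 * Real.sin t^2) := Real.sqrt_pos.2 hupos
    have hg : HasDerivAt (fun ρ : ℝ => 1 - ρ^2 * Real.sin t^2) (-(2*x*Real.sin t^2)) x := by
      simpa using (((hasDerivAt_pow 2 x).mul_const (Real.sin t^2)).const_sub 1)
    have hsq := hg.sqrt hupos.ne'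
    have hdiv := (hasDerivAt_const x (φ t)).div hsq hspos.ne'
    refine hdiv.congr_deriv ?_
    rw [Real.sq_sqrt hupos.le] at *
    field_simp
    ring
noncomputable def Cci (r : ℝ) : ℝ :=
  ∫ t in (0:ℝ)..(π/2), Real.cos t ^ 2 / Real.sqrt (1 - r^2 * Real.sin t ^ 2)
noncomputable def DKi (r : ℝ) : ℝ :=
  ∫ t in (0:ℝ)..(π/2), (r * Real.sin t ^ 2) /
    ((1 - r^2 * Real.sin t ^ 2) * Real.sqrt (1 - r^2 * Real.sin t ^ 2))
noncomputable def DCi (r : ℝ) : ℝ :=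
  ∫ t in (0:ℝ)..(π/2), Real.cos t ^ 2 * (r * Real.sin t ^ 2) /
    ((1 - r^2 * Real.sin t ^ 2) * Real.sqrt (1 - r^2 * Real.sin t ^ 2))

lemma sqrtu_le_one {r : ℝ} (t : ℝ) : Real.sqrt (1 - r^2 * Real.sin t ^ 2) ≤ 1 := by
  calc Real.sqrt (1 - r^2 * Real.sin t ^ 2) ≤ Real.sqrt 1 :=
        Real.sqrt_le_sqrt (by nlinarith [sq_nonneg (r * Real.sin t)])
    _ = 1 := Real.sqrt_one

lemma K_lb {r : ℝ} (hr : r^2 < 1) : π/2 ≤ EK r := by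
  have h : π/2 = ∫ _t in (0:ℝ)..(π/2), (1:ℝ) := by simp
  rw [h, EK]
  apply intervalIntegral.integral_mono_on (by positivity)
    intervalIntegrable_const ((cont_W hr _ continuous_const).intervalIntegrable _ _)
  intro t _
  rw [le_div_iff₀ (Real.sqrt_pos.2 (u_pos hr t)), one_mul]
  exact sqrtu_le_one t

lemma K_pos {r : ℝ} (hr : r^2 < 1) : 0 < EK r := lt_of_lt_of_le (by positivity) (K_lb hr)

lemma K_ub {r : ℝ} (hr : r^2 < 1) : EK r ≤ (π/2) * (1 / Real.sqrt (1 - r^2)) := by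
  have h : (π/2) * (1 / Real.sqrt (1 - r^2)) =
      ∫ _t in (0:ℝ)..(π/2), 1 / Real.sqrt (1 - r^2) := by
    rw [intervalIntegral.integral_const, smul_eq_mul]; ring
  rw [h, EK]
  apply intervalIntegral.integral_mono_on (by positivity)
    ((cont_W hr _ continuous_const).intervalIntegrable _ _) intervalIntegrable_const
  intro t _
  apply div_le_div_of_nonneg_left zero_le_one (Real.sqrt_pos.2 (by linarith))
  apply Real.sqrt_le_sqrt
  nlinarith [sq_nonneg (Real.sin t), sq_nonneg r, Real.sin_sq_le_one t]

lemma C_lb {r : ℝ} (hr : r^2 < 1) : π/4 ≤ Cci r := by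
  have h : π/4 = ∫ t in (0:ℝ)..(π/2), Real.cos t ^ 2 := by
    rw [integral_cos_sq]; simp [Real.cos_pi_div_two]; ring
  rw [h, Cci]
  apply intervalIntegral.integral_mono_on (by positivity)
    (by apply Continuous.intervalIntegrable; continuity)
    ((cont_W hr _ (by continuity)).intervalIntegrable _ _)
  intro t _
  have h1 := Real.sqrt_pos.2 (u_pos hr t)
  rw [le_div_iff₀ h1]
  nlinarith [sqrtu_le_one (r := r) t, sq_nonneg (Real.cos t)]

lemma C_ub {r : ℝ} (hr : r^2 < 1) : Cci r ≤ EK r := by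
  rw [Cci, EK]
  apply intervalIntegral.integral_mono_on (by positivity)
    ((cont_W hr _ (by continuity)).intervalIntegrable _ _)
    ((cont_W hr _ continuous_const).intervalIntegrable _ _)
  intro t _
  gcongr
  nlinarith [Real.sin_sq_add_cos_sq t]

lemma C_pos {r : ℝ} (hr : r^2 < 1) : 0 < Cci r := lt_of_lt_of_le (by positivity) (C_lb hr)

lemma numer_identity {r : ℝ} (hr : r^2 < 1) :
    EE r - (1 - r) * EK r = r * ((1 - r) * EK r + r * Cci r) := by
  have hWc : Continuous (fun t => 1 / Real.sqrt (1 - r^2 * Real.sin t ^ 2)) :=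
    cont_W hr _ continuous_const
  have hCc : Continuous (fun t => Real.cos t ^ 2 / Real.sqrt (1 - r^2 * Real.sin t ^ 2)) :=
    cont_W hr _ (by continuity)
  have hEc : Continuous (fun t => Real.sqrt (1 - r^2 * Real.sin t ^ 2)) := by continuity
  rw [EE, EK, Cci, ← intervalIntegral.integral_const_mul, ← intervalIntegral.integral_const_mul,
    ← intervalIntegral.integral_sub
      (hEc.intervalIntegrable _ _) ((continuous_const.fun_mul hWc).intervalIntegrable _ _),
    ← intervalIntegral.integral_add ((continuous_const.fun_mul hWc).intervalIntegrable _ _)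
      ((continuous_const.fun_mul hCc).intervalIntegrable _ _), ← intervalIntegral.integral_const_mul]
  apply intervalIntegral.integral_congr
  intro t _
  have hu := u_pos hr t
  have hs := Real.sqrt_pos.2 hu
  have hsq := Real.sq_sqrt hu.le
  dsimp only
  rw [Real.cos_sq']
  field_simp
  nlinarith [hsq]

lemma hasDerivAt_EK {r : ℝ} (hr0 : 0 < r) (hr1 : r < 1) : HasDerivAt EK (DKi r) r := by
  have h := hasDerivAt_Iphi (fun _ => 1) continuous_const (by intro t; simp) hr0 hr1
  simp only [one_mul] at h
  exact h

lemma hasDerivAt_Cci {r : ℝ} (hr0 : 0 < r) (hr1 : r < 1) : HasDerivAt Cci (DCi r) r := by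
  have h := hasDerivAt_Iphi (fun t => Real.cos t ^ 2) (by continuity)
    (by intro t
        rw [abs_of_nonneg (sq_nonneg _)]
        nlinarith [Real.sin_sq_add_cos_sq t, sq_nonneg (Real.sin t)]) hr0 hr1
  exact h

/-- the two-variable integrand whose double integral is `J`. -/
noncomputable def Gf (r t u : ℝ) : ℝ :=
  (1 / Real.sqrt (1 - r^2 * Real.sin t ^ 2)) *
      (Real.cos u ^ 2 / Real.sqrt (1 - r^2 * Real.sin u ^ 2))
    - r * (1-r) *
      ((Real.cos t ^ 2 / Real.sqrt (1 - r^2 * Real.sin t ^ 2)) *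
          ((r * Real.sin u ^ 2) /
            ((1 - r^2 * Real.sin u ^ 2) * Real.sqrt (1 - r^2 * Real.sin u ^ 2)))
        - (1 / Real.sqrt (1 - r^2 * Real.sin t ^ 2)) *
          (Real.cos u ^ 2 * (r * Real.sin u ^ 2) /
            ((1 - r^2 * Real.sin u ^ 2) * Real.sqrt (1 - r^2 * Real.sin u ^ 2))))

lemma swap_int {f : ℝ → ℝ → ℝ} (hf : Continuous (Function.uncurry f)) :
    ∫ t in (0:ℝ)..(π/2), ∫ u in (0:ℝ)..(π/2), f t u
      = ∫ t in (0:ℝ)..(π/2), ∫ u in (0:ℝ)..(π/2), f u t := by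
  have hab : (0:ℝ) ≤ π/2 := by positivity
  simp only [intervalIntegral.integral_of_le hab]
  have hint : Integrable (Function.uncurry f)
      ((volume.restrict (Ioc (0:ℝ) (π/2))).prod (volume.restrict (Ioc (0:ℝ) (π/2)))) := by
    rw [Measure.prod_restrict, ← Measure.volume_eq_prod]
    apply (hf.continuousOn.integrableOn_compact (isCompact_Icc.prod isCompact_Icc)).mono_set
    exact Set.prod_mono Ioc_subset_Icc_self Ioc_subset_Icc_self
  exact MeasureTheory.integral_integral_swap hint

lemma sym_nonneg {r x y a b sa sb : ℝ} (hr0 : 0 < r) (hr1 : r < 1)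
    (hx : 0 ≤ x) (hx1 : x ≤ 1) (hy : 0 ≤ y) (hy1 : y ≤ 1)
    (ha : a = 1 - r^2*x) (hb : b = 1 - r^2*y)
    (hsa : sa = Real.sqrt a) (hsb : sb = Real.sqrt b) :
    0 ≤ ((1/sa) * ((1-y)/sb)
          - r*(1-r) * (((1-x)/sa) * ((r*y)/(b*sb)) - (1/sa) * ((1-y)*(r*y)/(b*sb))))
       + ((1/sb) * ((1-x)/sa)
          - r*(1-r) * (((1-y)/sb) * ((r*x)/(a*sa)) - (1/sb) * ((1-x)*(r*x)/(a*sa)))) := by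
  have hr2 : r^2 < 1 := by nlinarith
  have hap : 0 < a := by rw [ha]; nlinarith
  have hbp : 0 < b := by rw [hb]; nlinarith
  have hsap : 0 < sa := by rw [hsa]; exact Real.sqrt_pos.2 hap
  have hsbp : 0 < sb := by rw [hsb]; exact Real.sqrt_pos.2 hbp
  have key := key_pt r x y hr0 hr1 hx hx1 hy hy1
  rw [← ha, ← hb] at key
  have heq : ((1/sa) * ((1-y)/sb)
          - r*(1-r) * (((1-x)/sa) * ((r*y)/(b*sb)) - (1/sa) * ((1-y)*(r*y)/(b*sb))))
       + ((1/sb) * ((1-x)/sa)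
          - r*(1-r) * (((1-y)/sb) * ((r*x)/(a*sa)) - (1/sb) * ((1-x)*(r*x)/(a*sa))))
      = ((2-x-y)*(a*b) - r^2*(1-r)*(x-y)^2) / (sa*sb*(a*b)) := by
    have h1 : a*b ≠ 0 := by positivity
    field_simp
    ring_nf
    rw [ha, hb]
    ring
  rw [heq]
  apply div_nonneg (by linarith) (by positivity)

lemma Gsym_nonneg {r : ℝ} (hr0 : 0 < r) (hr1 : r < 1) (t u : ℝ) :
    0 ≤ Gf r t u + Gf r u t := by
  have hr2 : r^2 < 1 := by nlinarith
  unfold Gf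
  rw [Real.cos_sq' t, Real.cos_sq' u]
  exact sym_nonneg hr0 hr1 (sq_nonneg _) (Real.sin_sq_le_one t)
    (sq_nonneg _) (Real.sin_sq_le_one u) rfl rfl rfl rfl

lemma J_nonneg {r : ℝ} (hr0 : 0 < r) (hr1 : r < 1) :
    0 ≤ EK r * Cci r - r*(1-r) * (Cci r * DKi r - EK r * DCi r) := by
  have hr2 : r^2 < 1 := by nlinarith
  have hW : Continuous (fun t => 1 / Real.sqrt (1 - r^2 * Real.sin t ^ 2)) :=
    cont_W hr2 _ continuous_const
  have hCW : Continuous (fun t => Real.cos t ^ 2 / Real.sqrt (1 - r^2 * Real.sin t ^ 2)) :=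
    cont_W hr2 _ (by continuity)
  have hD1 : Continuous (fun t => (r * Real.sin t ^ 2) /
      ((1 - r^2 * Real.sin t ^ 2) * Real.sqrt (1 - r^2 * Real.sin t ^ 2))) := by
    have := cont_D hr2 (fun _ => 1) continuous_const
    simpa only [one_mul] using this
  have hDC : Continuous (fun t => Real.cos t ^ 2 * (r * Real.sin t ^ 2) /
      ((1 - r^2 * Real.sin t ^ 2) * Real.sqrt (1 - r^2 * Real.sin t ^ 2))) :=
    cont_D hr2 _ (by continuity)
  -- closed forms of the inner integrals
  have hP : ∀ t : ℝ, (∫ u in (0:ℝ)..(π/2), Gf r t u)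
      = (1 / Real.sqrt (1 - r^2 * Real.sin t ^ 2)) * Cci r
        - r*(1-r) * ((Real.cos t ^ 2 / Real.sqrt (1 - r^2 * Real.sin t ^ 2)) * DKi r
          - (1 / Real.sqrt (1 - r^2 * Real.sin t ^ 2)) * DCi r) := by
    intro t
    unfold Gf Cci DKi DCi
    rw [intervalIntegral.integral_sub ((continuous_const.fun_mul hCW).intervalIntegrable _ _)
        ((continuous_const.fun_mul ((continuous_const.fun_mul hD1).fun_sub
          (continuous_const.fun_mul hDC))).intervalIntegrable _ _),
      intervalIntegral.integral_const_mul, intervalIntegral.integral_const_mul,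
      intervalIntegral.integral_sub ((continuous_const.fun_mul hD1).intervalIntegrable _ _)
        ((continuous_const.fun_mul hDC).intervalIntegrable _ _),
      intervalIntegral.integral_const_mul, intervalIntegral.integral_const_mul]
  have hQ : ∀ t : ℝ, (∫ u in (0:ℝ)..(π/2), Gf r u t)
      = EK r * (Real.cos t ^ 2 / Real.sqrt (1 - r^2 * Real.sin t ^ 2))
        - r*(1-r) * (Cci r * ((r * Real.sin t ^ 2) /
            ((1 - r^2 * Real.sin t ^ 2) * Real.sqrt (1 - r^2 * Real.sin t ^ 2)))
          - EK r * (Real.cos t ^ 2 * (r * Real.sin t ^ 2) /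
            ((1 - r^2 * Real.sin t ^ 2) * Real.sqrt (1 - r^2 * Real.sin t ^ 2)))) := by
    intro t
    unfold Gf EK Cci
    rw [intervalIntegral.integral_sub ((hW.fun_mul continuous_const).intervalIntegrable _ _)
        ((continuous_const.fun_mul ((hCW.fun_mul continuous_const).fun_sub
          (hW.fun_mul continuous_const))).intervalIntegrable _ _),
      intervalIntegral.integral_mul_const, intervalIntegral.integral_const_mul,
      intervalIntegral.integral_sub ((hCW.fun_mul continuous_const).intervalIntegrable _ _)
        ((hW.fun_mul continuous_const).intervalIntegrable _ _),
      intervalIntegral.integral_mul_const, intervalIntegral.integral_mul_const]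
  -- the double integral of the symmetrized integrand is nonnegative
  have hsum : 0 ≤ ∫ t in (0:ℝ)..(π/2),
      ((∫ u in (0:ℝ)..(π/2), Gf r t u) + (∫ u in (0:ℝ)..(π/2), Gf r u t)) := by
    apply intervalIntegral.integral_nonneg (by positivity)
    intro t _
    have hGt : Continuous (fun u => Gf r t u) := by
      unfold Gf
      exact (continuous_const.mul hCW).sub (continuous_const.mul
        ((continuous_const.mul hD1).sub (continuous_const.mul hDC)))
    have hGt' : Continuous (fun u => Gf r u t) := by
      unfold Gf
      exact (hW.mul continuous_const).sub (continuous_const.mul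
        ((hCW.mul continuous_const).sub (hW.mul continuous_const)))
    rw [← intervalIntegral.integral_add (hGt.intervalIntegrable _ _)
        (hGt'.intervalIntegrable _ _)]
    apply intervalIntegral.integral_nonneg (by positivity)
    intro u _
    exact Gsym_nonneg hr0 hr1 t u
  -- evaluate the outer integral
  have e1 : (∫ x in (0:ℝ)..(π/2), 1 / Real.sqrt (1 - r^2 * Real.sin x ^ 2)) = EK r := rfl
  have e2 : (∫ x in (0:ℝ)..(π/2), Real.cos x ^ 2 / Real.sqrt (1 - r^2 * Real.sin x ^ 2))
      = Cci r := rfl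
  have e3 : (∫ x in (0:ℝ)..(π/2), (r * Real.sin x ^ 2) /
      ((1 - r^2 * Real.sin x ^ 2) * Real.sqrt (1 - r^2 * Real.sin x ^ 2))) = DKi r := rfl
  have e4 : (∫ x in (0:ℝ)..(π/2), Real.cos x ^ 2 * (r * Real.sin x ^ 2) /
      ((1 - r^2 * Real.sin x ^ 2) * Real.sqrt (1 - r^2 * Real.sin x ^ 2))) = DCi r := rfl
  have hPint : (∫ t in (0:ℝ)..(π/2),
      ((1 / Real.sqrt (1 - r^2 * Real.sin t ^ 2)) * Cci r
        - r*(1-r) * ((Real.cos t ^ 2 / Real.sqrt (1 - r^2 * Real.sin t ^ 2)) * DKi r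
          - (1 / Real.sqrt (1 - r^2 * Real.sin t ^ 2)) * DCi r)))
      = EK r * Cci r - r*(1-r) * (Cci r * DKi r - EK r * DCi r) := by
    rw [intervalIntegral.integral_sub ((hW.fun_mul continuous_const).intervalIntegrable _ _)
        ((continuous_const.fun_mul ((hCW.fun_mul continuous_const).fun_sub
          (hW.fun_mul continuous_const))).intervalIntegrable _ _),
      intervalIntegral.integral_mul_const, intervalIntegral.integral_const_mul,
      intervalIntegral.integral_sub ((hCW.fun_mul continuous_const).intervalIntegrable _ _)
        ((hW.fun_mul continuous_const).intervalIntegrable _ _),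
      intervalIntegral.integral_mul_const, intervalIntegral.integral_mul_const, e1, e2]
  have hQint : (∫ t in (0:ℝ)..(π/2),
      (EK r * (Real.cos t ^ 2 / Real.sqrt (1 - r^2 * Real.sin t ^ 2))
        - r*(1-r) * (Cci r * ((r * Real.sin t ^ 2) /
            ((1 - r^2 * Real.sin t ^ 2) * Real.sqrt (1 - r^2 * Real.sin t ^ 2)))
          - EK r * (Real.cos t ^ 2 * (r * Real.sin t ^ 2) /
            ((1 - r^2 * Real.sin t ^ 2) * Real.sqrt (1 - r^2 * Real.sin t ^ 2))))))
      = EK r * Cci r - r*(1-r) * (Cci r * DKi r - EK r * DCi r) := by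
    rw [intervalIntegral.integral_sub ((continuous_const.fun_mul hCW).intervalIntegrable _ _)
        ((continuous_const.fun_mul ((continuous_const.fun_mul hD1).fun_sub
          (continuous_const.fun_mul hDC))).intervalIntegrable _ _),
      intervalIntegral.integral_const_mul, intervalIntegral.integral_const_mul,
      intervalIntegral.integral_sub ((continuous_const.fun_mul hD1).intervalIntegrable _ _)
        ((continuous_const.fun_mul hDC).intervalIntegrable _ _),
      intervalIntegral.integral_const_mul, intervalIntegral.integral_const_mul, e2, e3, e4]
  have heval : (∫ t in (0:ℝ)..(π/2),
      ((∫ u in (0:ℝ)..(π/2), Gf r t u) + (∫ u in (0:ℝ)..(π/2), Gf r u t)))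
      = 2 * (EK r * Cci r - r*(1-r) * (Cci r * DKi r - EK r * DCi r)) := by
    rw [intervalIntegral.integral_congr (g :=
      fun t => ((1 / Real.sqrt (1 - r^2 * Real.sin t ^ 2)) * Cci r
        - r*(1-r) * ((Real.cos t ^ 2 / Real.sqrt (1 - r^2 * Real.sin t ^ 2)) * DKi r
          - (1 / Real.sqrt (1 - r^2 * Real.sin t ^ 2)) * DCi r))
        + (EK r * (Real.cos t ^ 2 / Real.sqrt (1 - r^2 * Real.sin t ^ 2))
        - r*(1-r) * (Cci r * ((r * Real.sin t ^ 2) /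
            ((1 - r^2 * Real.sin t ^ 2) * Real.sqrt (1 - r^2 * Real.sin t ^ 2)))
          - EK r * (Real.cos t ^ 2 * (r * Real.sin t ^ 2) /
            ((1 - r^2 * Real.sin t ^ 2) * Real.sqrt (1 - r^2 * Real.sin t ^ 2))))))
      (fun t _ => by rw [hP t, hQ t]),
      intervalIntegral.integral_add
        (((hW.fun_mul continuous_const).fun_sub (continuous_const.fun_mul
          ((hCW.fun_mul continuous_const).fun_sub
            (hW.fun_mul continuous_const)))).intervalIntegrable _ _)
        (((continuous_const.fun_mul hCW).fun_sub (continuous_const.fun_mul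
          ((continuous_const.fun_mul hD1).fun_sub
            (continuous_const.fun_mul hDC)))).intervalIntegrable _ _),
      hPint, hQint]
    ring
  linarith [hsum, heval ▸ hsum]

noncomputable def hAux (r : ℝ) : ℝ := r * Cci r / ((1 - r) * EK r)

lemma hAux_nonneg {r : ℝ} (hr : r ∈ Ioo (0:ℝ) 1) : 0 ≤ hAux r := by
  obtain ⟨hr0, hr1⟩ := hr
  have hr2 : r^2 < 1 := by nlinarith
  unfold hAux
  exact div_nonneg (mul_nonneg hr0.le (C_pos hr2).le)
    (mul_nonneg (by linarith) (K_pos hr2).le)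

lemma hAux_hasDeriv {r : ℝ} (hr : r ∈ Ioo (0:ℝ) 1) :
    HasDerivAt hAux
      (((1 * Cci r + r * DCi r) * ((1-r) * EK r)
        - (r * Cci r) * ((0 - 1) * EK r + (1-r) * DKi r)) / ((1-r) * EK r)^2) r := by
  obtain ⟨hr0, hr1⟩ := hr
  have hr2 : r^2 < 1 := by nlinarith
  have hK := K_pos hr2
  have hden : (1-r) * EK r ≠ 0 := ne_of_gt (mul_pos (by linarith) hK)
  exact ((hasDerivAt_id r).mul (hasDerivAt_Cci hr0 hr1)).div
    (((hasDerivAt_const r 1).sub (hasDerivAt_id r)).mul (hasDerivAt_EK hr0 hr1)) hden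

lemma hAux_mono : MonotoneOn hAux (Ioo (0:ℝ) 1) := by
  apply monotoneOn_of_deriv_nonneg (convex_Ioo 0 1)
  · intro x hx
    exact (hAux_hasDeriv hx).differentiableAt.continuousAt.continuousWithinAt
  · intro x hx
    rw [interior_Ioo] at hx
    exact (hAux_hasDeriv hx).differentiableAt.differentiableWithinAt
  · intro x hx
    rw [interior_Ioo] at hx
    rw [(hAux_hasDeriv hx).deriv]
    obtain ⟨hx0, hx1⟩ := hx
    have hJ := J_nonneg hx0 hx1
    apply div_nonneg ?_ (sq_nonneg _)
    nlinarith [hJ]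

lemma feq {r : ℝ} (hr : r ∈ Ioo (0:ℝ) 1) :
    (EE r - (1 - r) * EK r) / (Real.sqrt r * (1 - r) * EK r)
      = Real.sqrt r * (1 + hAux r) := by
  obtain ⟨hr0, hr1⟩ := hr
  have hr2 : r^2 < 1 := by nlinarith
  have hK := K_pos hr2
  rw [numer_identity hr2]
  unfold hAux
  have hspos : 0 < Real.sqrt r := Real.sqrt_pos.2 hr0
  set s := Real.sqrt r with hsdef
  set K := EK r with hKdef
  set C := Cci r with hCdef
  have hss : s * s = r := Real.mul_self_sqrt hr0.le
  have h1 : (1 - s*s) ≠ 0 := by rw [hss]; intro h; nlinarith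
  rw [← hss]
  have h1' : 1 - s^2 ≠ 0 := by rwa [sq]
  field_simp

lemma hAux_le {r : ℝ} (hr : r ∈ Ioo (0:ℝ) 1) : hAux r ≤ r / (1 - r) := by
  obtain ⟨hr0, hr1⟩ := hr
  have hr2 : r^2 < 1 := by nlinarith
  have hK := K_pos hr2
  have hCK := C_ub hr2
  unfold hAux
  rw [div_le_div_iff₀ (mul_pos (by linarith) hK) (by linarith)]
  have : r * Cci r ≤ r * EK r := mul_le_mul_of_nonneg_left hCK hr0.le
  nlinarith

lemma part1 : StrictMonoOn
    (fun r => (EE r - (1 - r) * EK r) / (Real.sqrt r * (1 - r) * EK r))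
    (Ioo (0:ℝ) 1) := by
  intro x hx y hy hxy
  simp only
  rw [feq hx, feq hy]
  have h1 : Real.sqrt x < Real.sqrt y := Real.sqrt_lt_sqrt hx.1.le hxy
  have hm : hAux x ≤ hAux y := hAux_mono hx hy hxy.le
  have hp : (0:ℝ) < 1 + hAux x := by linarith [hAux_nonneg hx]
  calc Real.sqrt x * (1 + hAux x) < Real.sqrt y * (1 + hAux x) :=
        mul_lt_mul_of_pos_right h1 hp
    _ ≤ Real.sqrt y * (1 + hAux y) :=
        mul_le_mul_of_nonneg_left (by linarith) (Real.sqrt_nonneg y)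

lemma part2 : Tendsto (fun r => (EE r - (1 - r) * EK r) / (Real.sqrt r * (1 - r) * EK r))
    (nhdsWithin 0 (Ioi (0:ℝ))) (nhds 0) := by
  have hlow : Tendsto (fun r : ℝ => Real.sqrt r) (nhdsWithin 0 (Ioi (0:ℝ))) (nhds 0) := by
    have := (Real.continuous_sqrt.tendsto' 0 0 (by simp))
    exact this.mono_left nhdsWithin_le_nhds
  have hup : Tendsto (fun r : ℝ => Real.sqrt r * (1 / (1 - r)))
      (nhdsWithin 0 (Ioi (0:ℝ))) (nhds 0) := by
    have h2 : ContinuousAt (fun r : ℝ => Real.sqrt r * (1 / (1 - r))) 0 := by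
      apply Real.continuous_sqrt.continuousAt.mul
      apply ContinuousAt.div continuousAt_const (continuousAt_const.sub continuousAt_id)
      norm_num
    have := h2.tendsto
    simp only [Real.sqrt_zero, zero_mul] at this
    exact this.mono_left nhdsWithin_le_nhds
  apply tendsto_of_tendsto_of_tendsto_of_le_of_le' hlow hup
  · filter_upwards [Ioo_mem_nhdsGT_of_mem (show (0:ℝ) ∈ Ico (0:ℝ) 1 by constructor <;> norm_num)]
      with r hr
    rw [feq hr]
    nlinarith [hAux_nonneg hr, Real.sqrt_nonneg r]
  · filter_upwards [Ioo_mem_nhdsGT_of_mem (show (0:ℝ) ∈ Ico (0:ℝ) 1 by constructor <;> norm_num)]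
      with r hr
    rw [feq hr]
    have h3 : 1 + hAux r ≤ 1 / (1 - r) := by
      have := hAux_le hr
      have h4 : (0:ℝ) < 1 - r := by linarith [hr.2]
      rw [le_div_iff₀ h4]
      have : (1 + hAux r) * (1 - r) = (1 - r) + hAux r * (1-r) := by ring
      rw [this]
      have h5 : hAux r * (1-r) ≤ r / (1-r) * (1-r) :=
        mul_le_mul_of_nonneg_right (hAux_le hr) h4.le
      rw [div_mul_cancel₀ _ h4.ne'] at h5
      linarith
    exact mul_le_mul_of_nonneg_left h3 (Real.sqrt_nonneg r)

lemma part3 : Tendsto (fun r => (EE r - (1 - r) * EK r) / (Real.sqrt r * (1 - r) * EK r))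
    (nhdsWithin 1 (Iio (1:ℝ))) atTop := by
  have T2 : Tendsto (fun r : ℝ => 8 * Real.sqrt (1 - r)) (nhdsWithin 1 (Iio (1:ℝ)))
      (nhdsWithin 0 (Ioi (0:ℝ))) := by
    rw [tendsto_nhdsWithin_iff]
    constructor
    · have hc : ContinuousAt (fun r : ℝ => 8 * Real.sqrt (1 - r)) 1 := by
        exact continuousAt_const.mul (Real.continuous_sqrt.continuousAt.comp
          (continuousAt_const.sub continuousAt_id))
      have := hc.tendsto
      simp only [sub_self, Real.sqrt_zero, mul_zero] at this
      exact this.mono_left nhdsWithin_le_nhds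
    · filter_upwards [self_mem_nhdsWithin] with r hr
      have : (0:ℝ) < 1 - r := by simpa using sub_pos.2 (mem_Iio.1 hr)
      have := Real.sqrt_pos.2 this
      exact mem_Ioi.2 (by linarith)
  have T : Tendsto (fun r : ℝ => (8 * Real.sqrt (1 - r))⁻¹) (nhdsWithin 1 (Iio (1:ℝ))) atTop :=
    tendsto_inv_nhdsGT_zero.comp T2
  apply tendsto_atTop_mono' _ _ T
  filter_upwards [Ioo_mem_nhdsLT_of_mem
    (show (1:ℝ) ∈ Ioc (1/2:ℝ) 1 by constructor <;> norm_num)] with r hr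
  obtain ⟨hr0, hr1⟩ := hr
  have hr0' : (0:ℝ) < r := by linarith
  have hrIoo : r ∈ Ioo (0:ℝ) 1 := ⟨hr0', hr1⟩
  have hr2 : r^2 < 1 := by nlinarith
  have hK := K_pos hr2
  have hC := C_lb hr2
  have h1r : (0:ℝ) < 1 - r := by linarith
  have hs1r : (0:ℝ) < Real.sqrt (1 - r) := Real.sqrt_pos.2 h1r
  rw [feq hrIoo]
  -- (1-r) * EK r ≤ (π/2) * sqrt (1-r)
  have hden : (1-r) * EK r ≤ (π/2) * Real.sqrt (1-r) := by
    have hmono : Real.sqrt (1-r) ≤ Real.sqrt (1-r^2) := Real.sqrt_le_sqrt (by nlinarith)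
    have hpos2 : (0:ℝ) < Real.sqrt (1 - r^2) := Real.sqrt_pos.2 (by nlinarith)
    calc (1-r) * EK r ≤ (1-r) * ((π/2) * (1 / Real.sqrt (1-r^2))) :=
          mul_le_mul_of_nonneg_left (K_ub hr2) h1r.le
      _ ≤ (1-r) * ((π/2) * (1 / Real.sqrt (1-r))) := by
          have : 1 / Real.sqrt (1-r^2) ≤ 1 / Real.sqrt (1-r) := by
            apply div_le_div_of_nonneg_left zero_le_one hs1r hmono
          exact mul_le_mul_of_nonneg_left
            (mul_le_mul_of_nonneg_left this (by positivity)) h1r.le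
      _ = (π/2) * ((1-r) / Real.sqrt (1-r)) := by ring
      _ = (π/2) * Real.sqrt (1-r) := by rw [Real.div_sqrt]
  -- hAux r ≥ (π/8) / ((π/2) * sqrt (1-r))
  have hAux_lb : (π/8) / ((π/2) * Real.sqrt (1-r)) ≤ hAux r := by
    unfold hAux
    apply div_le_div₀ (mul_nonneg hr0'.le (C_pos hr2).le) ?_ (mul_pos h1r hK) hden
    nlinarith [mul_le_mul_of_nonneg_right hr0.le (C_pos hr2).le, hC]
  have hsr : (1/2:ℝ) ≤ Real.sqrt r := by
    rw [show (1/2:ℝ) = Real.sqrt (1/4) by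
      rw [show (1/4:ℝ) = (1/2)^2 by norm_num, Real.sqrt_sq]; norm_num]
    exact Real.sqrt_le_sqrt (by linarith)
  have hA0 := hAux_nonneg hrIoo
  have key : (π/8) / ((π/2) * Real.sqrt (1-r)) = (1/4) / Real.sqrt (1-r) := by
    rw [div_eq_div_iff (by positivity) (by positivity)]
    ring
  calc (8 * Real.sqrt (1-r))⁻¹ = (1/2) * ((1/4) / Real.sqrt (1-r)) := by
        field_simp; ring
    _ ≤ (1/2) * hAux r := by
        apply mul_le_mul_of_nonneg_left _ (by norm_num)
        rw [← key]; exact hAux_lb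
    _ ≤ Real.sqrt r * hAux r := mul_le_mul_of_nonneg_right hsr hA0
    _ ≤ Real.sqrt r * (1 + hAux r) := by
        apply mul_le_mul_of_nonneg_left (by linarith) (Real.sqrt_nonneg r)

theorem f8_properties :
    StrictMonoOn
      (fun r => (EE r - (1 - r) * EK r) / (Real.sqrt r * (1 - r) * EK r))
      (Ioo (0:ℝ) 1) ∧
    Tendsto (fun r => (EE r - (1 - r) * EK r) / (Real.sqrt r * (1 - r) * EK r))
      (nhdsWithin 0 (Ioi (0:ℝ))) (nhds 0) ∧
    Tendsto (fun r => (EE r - (1 - r) * EK r) / (Real.sqrt r * (1 - r) * EK r))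
      (nhdsWithin 1 (Iio (1:ℝ))) atTop :=
  ⟨part1, part2, part3⟩
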